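/- Let β₁,…,β_n > 0, α₂,…,α_n > 0, α₁ > 0, ℓ > 0, ε > 0, with β₁⋯β_n > ε·α₂⋯α_n. For Ĝ(s) = (α₁⋯α_n)/((s+ℓ)[(s+β₁)⋯(s+β_n) − ε·α₂⋯α_n]), the supremum over real ω of |Ĝ(iω)| equals (α₁⋯α_n)/(ℓ(β₁⋯β_n − ε·α₂⋯α_n)), attained at ω = 0. -/

import Mathlib

open Complex in
theorem gain_is_sup_feedback (n : ℕ) (hn : 1 ≤ n)
    (α₁ : ℝ) (hα₁ : 0 < α₁) (α : Fin (n-1) → ℝ) (hα : ∀ i, 0 < α i)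
    (β : Fin n → ℝ) (hβ : ∀ i, 0 < β i)
    (ℓ ε : ℝ) (hℓ : 0 < ℓ) (hε : 0 < ε)
    (hstab : ε * ∏ i, α i < ∏ i, β i) :
    IsGreatest
      (Set.range (fun ω : ℝ =>
        ‖(((α₁ * ∏ i, α i : ℝ) /
          ((Complex.I * ω + ℓ) *
            ((∏ i, (Complex.I * ω + (β i : ℂ))) - ((ε * ∏ i, α i : ℝ) : ℂ)))) : ℂ)‖))
      ((α₁ * ∏ i, α i) / (ℓ * ((∏ i, β i) - ε * ∏ i, α i))) := by
  set A : ℝ := α₁ * ∏ i, α i with hA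
  set c : ℝ := ε * ∏ i, α i with hc
  set P : ℝ := ∏ i, β i with hP
  have hAp : 0 < A := mul_pos hα₁ (Finset.prod_pos fun i _ => hα i)
  have hcp : 0 < c := mul_pos hε (Finset.prod_pos fun i _ => hα i)
  have hPp : 0 < P := Finset.prod_pos fun i _ => hβ i
  have hden : 0 < ℓ * (P - c) := mul_pos hℓ (sub_pos.mpr hstab)
  constructor
  · refine ⟨0, ?_⟩
    have h1 : Complex.I * (0:ℝ) + (ℓ:ℂ) = (ℓ:ℂ) := by push_cast; ring
    have h2 : (∏ i, (Complex.I * (0:ℝ) + (β i : ℂ))) = ((P:ℝ):ℂ) := by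
      rw [hP]; push_cast
      exact Finset.prod_congr rfl fun i _ => by ring
    simp only [h1, h2]
    rw [show ((ℓ:ℂ)) * (((P:ℝ):ℂ) - ((c:ℝ):ℂ)) = ((ℓ * (P - c) : ℝ) : ℂ) by push_cast; ring]
    rw [← Complex.ofReal_div, Complex.norm_real, Real.norm_eq_abs,
      _root_.abs_of_nonneg (div_nonneg hAp.le hden.le)]
  · rintro x ⟨ω, rfl⟩
    simp only
    rw [norm_div, Complex.norm_real, Real.norm_eq_abs, _root_.abs_of_nonneg hAp.le]
    have hre1 : ℓ ≤ ‖Complex.I * ω + ℓ‖ := by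
      have := Complex.abs_re_le_norm (Complex.I * ω + ℓ)
      simp at this
      calc ℓ = |ℓ| := (_root_.abs_of_pos hℓ).symm
        _ ≤ _ := this
    have hre2 : P - c ≤ ‖(∏ i, (Complex.I * ω + (β i : ℂ))) - ((c:ℝ):ℂ)‖ := by
      have hprod : P ≤ ‖∏ i, (Complex.I * ω + (β i : ℂ))‖ := by
        rw [norm_prod, hP]
        apply Finset.prod_le_prod (fun i _ => (hβ i).le)
        intro i _
        have := Complex.abs_re_le_norm (Complex.I * ω + β i)
        simp at this
        calc β i = |β i| := (_root_.abs_of_pos (hβ i)).symm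
          _ ≤ _ := this
      calc P - c ≤ ‖∏ i, (Complex.I * ω + (β i : ℂ))‖ - ‖((c:ℝ):ℂ)‖ := by
            rw [Complex.norm_real, Real.norm_eq_abs, _root_.abs_of_pos hcp]; linarith
        _ ≤ _ := by
            have h := norm_sub_le (∏ i, (Complex.I * ω + (β i : ℂ))) ((c:ℝ):ℂ)
            simp at h
            have h2 : ‖∏ i, (Complex.I * ω + (β i : ℂ))‖ ≤ ‖(∏ i, (Complex.I * ω + (β i : ℂ))) - ((c:ℝ):ℂ)‖ + ‖((c:ℝ):ℂ)‖ := by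
              have := norm_add_le ((∏ i, (Complex.I * ω + (β i : ℂ))) - ((c:ℝ):ℂ)) ((c:ℝ):ℂ)
              simpa using this
            linarith
    have hdge : ℓ * (P - c) ≤ ‖(Complex.I * ω + ℓ) * (∏ i, (Complex.I * ω + (β i : ℂ)) - ((c:ℝ):ℂ))‖ := by
      rw [norm_mul]
      exact mul_le_mul hre1 hre2 (sub_pos.mpr hstab).le (norm_nonneg _)
    exact div_le_div_of_nonneg_left hAp.le hden hdge
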